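/- Counting theorem for QK: if V = (v_i)_{i=1}^N is an orthonormal family in C^{2^s}, and for each i there exist a string σ_i in the domain of the prefix-free universal machine U and a finite orthonormal set A_i ⊆ C^{2^s} with U(σ_i) = A_i, ⟨v_i| F_i |v_i⟩ > ε where F_i = ∑_{t∈A_i} |t⟩⟨t|, and |σ_i| + log₂|A_i| ≤ B, then N ≤ ε^{-1}·2^B. -/

import Mathlib

/-- A partial function on binary strings is prefix-free if no two distinct strings in its
domain are comparable under the prefix relation. -/
def PrefixFree {X : Type*} (U : List Bool → Option X) : Prop :=
  ∀ x y : List Bool, (U x).isSome → (U y).isSome → x <+: y → x = y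

open Finset in
lemma kraft_nat (S : Finset (List Bool))
    (hpf : ∀ x ∈ S, ∀ y ∈ S, x <+: y → x = y) (L : ℕ)
    (hL : ∀ τ ∈ S, τ.length ≤ L) :
    ∑ τ ∈ S, 2 ^ (L - τ.length) ≤ 2 ^ L := by
  classical
  set ext : List Bool → Finset (List Bool) :=
    fun τ => (Finset.univ : Finset (List.Vector Bool (L - τ.length))).image
      (fun r => τ ++ r.toList) with hext
  have hinj : ∀ τ : List Bool, Function.Injective
      (fun r : List.Vector Bool (L - τ.length) => τ ++ r.toList) := by
    intro τ a b h
    exact List.Vector.toList_injective (List.append_cancel_left h)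
  have hcard : ∀ τ : List Bool, (ext τ).card = 2 ^ (L - τ.length) := by
    intro τ
    rw [hext]
    rw [Finset.card_image_of_injective _ (hinj τ), Finset.card_univ]
    simp [card_vector]
  have hpre : ∀ τ : List Bool, ∀ l ∈ ext τ, τ <+: l := by
    intro τ l hl
    simp only [hext, Finset.mem_image, Finset.mem_univ, true_and] at hl
    obtain ⟨r, rfl⟩ := hl
    exact ⟨r.toList, rfl⟩
  have hdisj : ∀ x ∈ S, ∀ y ∈ S, x ≠ y → Disjoint (ext x) (ext y) := by
    intro x hx y hy hxy
    rw [Finset.disjoint_left]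
    intro l hlx hly
    have h1 := hpre x l hlx
    have h2 := hpre y l hly
    rcases le_total x.length y.length with h | h
    · exact hxy (hpf x hx y hy (List.prefix_of_prefix_length_le h1 h2 h))
    · exact hxy (hpf y hy x hx (List.prefix_of_prefix_length_le h2 h1 h)).symm
  have hsub : S.biUnion ext ⊆
      (Finset.univ : Finset (List.Vector Bool L)).image List.Vector.toList := by
    intro l hl
    simp only [Finset.mem_biUnion] at hl
    obtain ⟨τ, hτ, hlτ⟩ := hl
    simp only [hext, Finset.mem_image, Finset.mem_univ, true_and] at hlτ ⊢
    obtain ⟨r, rfl⟩ := hlτ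
    refine ⟨⟨τ ++ r.toList, ?_⟩, rfl⟩
    have := r.toList_length
    have := hL τ hτ
    simp only [List.length_append, this]
    omega
  calc ∑ τ ∈ S, 2 ^ (L - τ.length) = ∑ τ ∈ S, (ext τ).card := by
        exact (Finset.sum_congr rfl fun τ _ => (hcard τ).symm)
    _ = (S.biUnion ext).card := (Finset.card_biUnion hdisj).symm
    _ ≤ ((Finset.univ : Finset (List.Vector Bool L)).image List.Vector.toList).card :=
        Finset.card_le_card hsub
    _ ≤ 2 ^ L := by
        rw [Finset.card_image_of_injective _ List.Vector.toList_injective, Finset.card_univ]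
        simp [card_vector]

lemma kraft_real (S : Finset (List Bool))
    (hpf : ∀ x ∈ S, ∀ y ∈ S, x <+: y → x = y) :
    ∑ τ ∈ S, ((2 : ℝ) ^ τ.length)⁻¹ ≤ 1 := by
  classical
  set L := S.sup (·.length) with hLdef
  have hL : ∀ τ ∈ S, τ.length ≤ L := fun τ hτ => Finset.le_sup (f := (·.length)) hτ
  have hnat := kraft_nat S hpf L hL
  have hcast : (∑ τ ∈ S, (2 : ℝ) ^ (L - τ.length)) ≤ 2 ^ L := by
    exact_mod_cast hnat
  have key : ∀ τ ∈ S, ((2 : ℝ) ^ τ.length)⁻¹ = (2 : ℝ) ^ (L - τ.length) / 2 ^ L := by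
    intro τ hτ
    rw [eq_div_iff (by positivity)]
    rw [inv_mul_eq_div, div_eq_iff (by positivity), ← pow_add]
    have := hL τ hτ
    congr 1
    omega
  calc ∑ τ ∈ S, ((2 : ℝ) ^ τ.length)⁻¹
      = (∑ τ ∈ S, (2 : ℝ) ^ (L - τ.length)) / 2 ^ L := by
        rw [Finset.sum_div]; exact Finset.sum_congr rfl key
    _ ≤ 2 ^ L / 2 ^ L := by gcongr
    _ ≤ 1 := by rw [div_self (by positivity)]

/-- **counting theorem for QK.**  Let `(v_i)_{i=1}^N` be an orthonormal family
in `ℂ^{2^s}`.  Suppose for each `i` there are a string `σ_i` in the domain of the prefix-free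
machine `U` and a finite orthonormal set `A_i` with `U(σ_i) = A_i`,
`⟨v_i| F_i |v_i⟩ = ∑_{t ∈ A_i} |⟨t, v_i⟩|² > ε`, and `|σ_i| + log₂|A_i| ≤ B`.
Then `N ≤ ε⁻¹·2^B`. -/
theorem stmt3 (s N : ℕ) (ε : ℝ) (hε : 0 < ε)
    (v : Fin N → EuclideanSpace ℂ (Fin (2 ^ s))) (hv : Orthonormal ℂ v)
    (U : List Bool → Option (Finset (EuclideanSpace ℂ (Fin (2 ^ s))))) (hpf : PrefixFree U)
    (σ : Fin N → List Bool) (A : Fin N → Finset (EuclideanSpace ℂ (Fin (2 ^ s))))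
    (hU : ∀ i, U (σ i) = some (A i))
    (hA : ∀ i, Orthonormal ℂ (fun t : (A i : Set (EuclideanSpace ℂ (Fin (2 ^ s)))) =>
      (t : EuclideanSpace ℂ (Fin (2 ^ s)))))
    (hproj : ∀ i, ε < ∑ t ∈ A i, ‖(inner ℂ t (v i) : ℂ)‖ ^ 2)
    (B : ℝ) (hB : ∀ i, ((σ i).length : ℝ) + Real.logb 2 ((A i).card) ≤ B) :
    (N : ℝ) ≤ ε⁻¹ * (2 : ℝ) ^ B := by
  classical
  have hAne : ∀ i, (A i).Nonempty := by
    intro i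
    rw [← Finset.card_pos]
    by_contra h
    have h0 : A i = ∅ := Finset.card_eq_zero.mp (by omega)
    have := hproj i
    rw [h0, Finset.sum_empty] at this
    linarith
  have hAcongr : ∀ i j, σ i = σ j → A i = A j := by
    intro i j h
    have h1 := hU i
    rw [h, hU j] at h1
    exact (Option.some_inj.mp h1).symm
  set S := Finset.image σ Finset.univ with hS
  have hSpf : ∀ x ∈ S, ∀ y ∈ S, x <+: y → x = y := by
    intro x hx y hy hxy
    simp only [hS, Finset.mem_image, Finset.mem_univ, true_and] at hx hy
    obtain ⟨i, rfl⟩ := hx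
    obtain ⟨j, rfl⟩ := hy
    exact hpf _ _ (by rw [hU i]; rfl) (by rw [hU j]; rfl) hxy
  have hcardB : ∀ i, ((A i).card : ℝ) ≤ (2:ℝ) ^ (B - ((σ i).length : ℝ)) := by
    intro i
    have hpos : (0:ℝ) < (A i).card := by exact_mod_cast (hAne i).card_pos
    have h1 : Real.logb 2 ((A i).card) ≤ B - ((σ i).length : ℝ) := by linarith [hB i]
    calc ((A i).card : ℝ) = (2:ℝ) ^ Real.logb 2 ((A i).card) :=
          (Real.rpow_logb (by norm_num) (by norm_num) hpos).symm
      _ ≤ (2:ℝ) ^ (B - ((σ i).length : ℝ)) :=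
          Real.rpow_le_rpow_of_exponent_le (by norm_num) h1
  have hper : ∀ τ ∈ S, ∑ i ∈ Finset.univ.filter (fun i => σ i = τ),
      ∑ t ∈ A i, ‖(inner ℂ t (v i) : ℂ)‖ ^ 2 ≤ (2:ℝ)^B * ((2:ℝ)^τ.length)⁻¹ := by
    intro τ hτ
    simp only [hS, Finset.mem_image, Finset.mem_univ, true_and] at hτ
    obtain ⟨i₀, rfl⟩ := hτ
    set F := Finset.univ.filter (fun i => σ i = σ i₀) with hF
    have hAeq : ∀ i ∈ F, A i = A i₀ := by
      intro i hi
      simp only [hF, Finset.mem_filter] at hi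
      exact hAcongr i i₀ hi.2
    calc ∑ i ∈ F, ∑ t ∈ A i, ‖(inner ℂ t (v i) : ℂ)‖ ^ 2
        = ∑ i ∈ F, ∑ t ∈ A i₀, ‖(inner ℂ t (v i) : ℂ)‖ ^ 2 :=
          Finset.sum_congr rfl fun i hi => by rw [hAeq i hi]
      _ = ∑ t ∈ A i₀, ∑ i ∈ F, ‖(inner ℂ t (v i) : ℂ)‖ ^ 2 := Finset.sum_comm
      _ ≤ ∑ t ∈ A i₀, 1 := by
          refine Finset.sum_le_sum fun t ht => ?_
          have ht1 : ‖t‖ = 1 := (hA i₀).1 ⟨t, Finset.mem_coe.mpr ht⟩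
          have hb := hv.sum_inner_products_le (s := F) t
          calc ∑ i ∈ F, ‖(inner ℂ t (v i) : ℂ)‖ ^ 2
              = ∑ i ∈ F, ‖(inner ℂ (v i) t : ℂ)‖ ^ 2 :=
                Finset.sum_congr rfl fun i _ => by rw [norm_inner_symm]
            _ ≤ ‖t‖ ^ 2 := hb
            _ = 1 := by rw [ht1]; norm_num
      _ = ((A i₀).card : ℝ) := by rw [Finset.sum_const]; simp
      _ ≤ (2:ℝ) ^ (B - ((σ i₀).length : ℝ)) := hcardB i₀
      _ = (2:ℝ)^B * ((2:ℝ)^(σ i₀).length)⁻¹ := by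
          rw [Real.rpow_sub (by norm_num), Real.rpow_natCast, div_eq_mul_inv]
  have main : (N:ℝ) * ε ≤ (2:ℝ)^B := by
    calc (N:ℝ) * ε = ∑ _i : Fin N, ε := by
          rw [Finset.sum_const]; simp [mul_comm]
      _ ≤ ∑ i : Fin N, ∑ t ∈ A i, ‖(inner ℂ t (v i) : ℂ)‖ ^ 2 :=
          Finset.sum_le_sum fun i _ => (hproj i).le
      _ = ∑ τ ∈ S, ∑ i ∈ Finset.univ.filter (fun i => σ i = τ),
            ∑ t ∈ A i, ‖(inner ℂ t (v i) : ℂ)‖ ^ 2 :=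
          (Finset.sum_fiberwise_of_maps_to
            (fun i _ => Finset.mem_image_of_mem σ (Finset.mem_univ i)) _).symm
      _ ≤ ∑ τ ∈ S, (2:ℝ)^B * ((2:ℝ)^τ.length)⁻¹ := Finset.sum_le_sum hper
      _ = (2:ℝ)^B * ∑ τ ∈ S, ((2:ℝ)^τ.length)⁻¹ := by rw [Finset.mul_sum]
      _ ≤ (2:ℝ)^B * 1 :=
          mul_le_mul_of_nonneg_left (kraft_real S hSpf)
            (Real.rpow_pos_of_pos (by norm_num) B).le
      _ = (2:ℝ)^B := mul_one _
  rw [inv_mul_eq_div, le_div_iff₀ hε]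
  exact main
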